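/- Let u = x_n x_{n-1} … x_2 x_1 be a vertex of the n-dimensional varietal hypercube VQ_n. Then a vertex v = y_n y_{n-1} … y_2 y_1 is adjacent to u if and only if either (1) there exists 1 ≤ i ≤ n with 3 ∤ i such that y_i = x_i + 1 and y_j = x_j for all j ≠ i, or (2) there exists 1 ≤ i ≤ n with 3 | i such that y_i = x_i + 1, y_{i-2} = x_{i-1} + x_{i-2}, and y_j = x_j for all j ∉ {i, i-2} (all arithmetic in Z_2). -/

import Mathlib

/-- The recursive adjacency relation of the varietal hypercube `VQ_n`.
Coordinate `i : Fin n` of a vertex stands for the bit `x_{i+1}` of the label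
`x_n x_{n-1} … x_2 x_1`; in particular `Fin.last` is the prefix bit added last. -/
def VQRel : (n : ℕ) → (Fin n → ZMod 2) → (Fin n → ZMod 2) → Prop
  | 0, _, _ => False
  | n + 1, x, y =>
    if x (Fin.last n) = y (Fin.last n) then
      -- both in the same copy of `VQ_n`
      VQRel n (Fin.init x) (Fin.init y)
    else if (n + 1) % 3 = 0 then
      (∀ i : Fin n, (i : ℕ) < n - 2 → x i.castSucc = y i.castSucc) ∧
        y ⟨n - 1, by omega⟩ = x ⟨n - 1, by omega⟩ ∧
        y ⟨n - 2, by omega⟩ = x ⟨n - 2, by omega⟩ + x ⟨n - 1, by omega⟩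
    else
      ∀ i : Fin n, x i.castSucc = y i.castSucc

/-- The varietal hypercube `VQ_n`. -/
def varietalCube (n : ℕ) : SimpleGraph (Fin n → ZMod 2) :=
  SimpleGraph.fromRel (VQRel n)

private lemma z1 : ∀ a b : ZMod 2, (b = a + 1) ↔ ¬ a = b := by decide
private lemma z2 : ∀ a b c : ZMod 2, a = b + c → b = a + c := by decide
private lemma z3 : ∀ a : ZMod 2, ¬ a = a + 1 := by decide

/-- The target description of adjacency. -/
def Pred (n : ℕ) (u v : Fin n → ZMod 2) : Prop :=
  ∃ i : Fin n,
    (¬ (3 ∣ ((i : ℕ) + 1)) ∧ v i = u i + 1 ∧ ∀ j : Fin n, j ≠ i → v j = u j) ∨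
    ((3 ∣ ((i : ℕ) + 1)) ∧ v i = u i + 1 ∧
      v ⟨Nat.sub (i : ℕ) 2, by have := i.isLt; show (i : ℕ) - 2 < n; omega⟩ =
        u ⟨Nat.sub (i : ℕ) 1, by have := i.isLt; show (i : ℕ) - 1 < n; omega⟩ +
          u ⟨Nat.sub (i : ℕ) 2, by have := i.isLt; show (i : ℕ) - 2 < n; omega⟩ ∧
      ∀ j : Fin n, j ≠ i → (j : ℕ) ≠ (i : ℕ) - 2 → v j = u j)

lemma vq_symm : ∀ n (u v : Fin n → ZMod 2), VQRel n u v → VQRel n v u := by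
  intro n
  induction n with
  | zero => intro u v h; exact h
  | succ n ih =>
    intro u v h
    unfold VQRel at h ⊢
    by_cases hl : u (Fin.last n) = v (Fin.last n)
    · rw [if_pos hl] at h
      rw [if_pos hl.symm]
      exact ih _ _ h
    · rw [if_neg hl] at h
      rw [if_neg (fun e => hl e.symm)]
      by_cases h3 : (n + 1) % 3 = 0
      · rw [if_pos h3] at h ⊢
        obtain ⟨ha, hb, hc⟩ := h
        refine ⟨fun i hi => (ha i hi).symm, hb.symm, ?_⟩
        rw [hb]
        exact z2 _ _ _ hc
      · rw [if_neg h3] at h ⊢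
        exact fun i => (h i).symm

lemma vq_iff : ∀ n (u v : Fin n → ZMod 2), VQRel n u v ↔ Pred n u v := by
  intro n
  induction n with
  | zero =>
    intro u v
    constructor
    · intro h; exact h.elim
    · rintro ⟨i, -⟩; exact i.elim0
  | succ n ih =>
    intro u v
    unfold VQRel
    by_cases hl : u (Fin.last n) = v (Fin.last n)
    · rw [if_pos hl, ih]
      constructor
      · rintro ⟨i, h | h⟩
        · refine ⟨i.castSucc, Or.inl ⟨h.1, h.2.1, ?_⟩⟩
          intro j hj
          rcases Fin.eq_castSucc_or_eq_last j with ⟨j', rfl⟩ | rfl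
          · exact h.2.2 j' (fun e => hj (congrArg Fin.castSucc e))
          · exact hl.symm
        · refine ⟨i.castSucc, Or.inr ⟨h.1, h.2.1, h.2.2.1, ?_⟩⟩
          intro j hj hj2
          rcases Fin.eq_castSucc_or_eq_last j with ⟨j', rfl⟩ | rfl
          · exact h.2.2.2 j' (fun e => hj (congrArg Fin.castSucc e)) hj2
          · exact hl.symm
      · rintro ⟨i, h | h⟩
        · have hi : (i : ℕ) < n := by
            rcases Nat.lt_or_ge (i : ℕ) n with h' | h'
            · exact h'
            · exfalso
              have : i = Fin.last n := Fin.ext (by have := i.isLt; simp [Fin.last]; omega)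
              rw [this] at h
              exact z3 _ (hl ▸ h.2.1)
          refine ⟨⟨(i : ℕ), hi⟩, Or.inl ⟨h.1, ?_, ?_⟩⟩
          · have : (⟨(i : ℕ), hi⟩ : Fin n).castSucc = i := Fin.ext rfl
            show v ((⟨(i : ℕ), hi⟩ : Fin n).castSucc) = u ((⟨(i : ℕ), hi⟩ : Fin n).castSucc) + 1
            rw [this]; exact h.2.1
          · intro j hj
            have : j.castSucc ≠ i := by
              intro e; apply hj; apply Fin.ext
              have : ((j.castSucc : Fin (n+1)) : ℕ) = (i : ℕ) := congrArg Fin.val e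
              simpa using this
            exact h.2.2 j.castSucc this
        · have hi : (i : ℕ) < n := by
            rcases Nat.lt_or_ge (i : ℕ) n with h' | h'
            · exact h'
            · exfalso
              have : i = Fin.last n := Fin.ext (by have := i.isLt; simp [Fin.last]; omega)
              rw [this] at h
              exact z3 _ (hl ▸ h.2.1)
          have hge : 2 ≤ (i : ℕ) := by
            have := h.1; omega
          refine ⟨⟨(i : ℕ), hi⟩, Or.inr ⟨h.1, ?_, ?_, ?_⟩⟩
          · have e : (⟨(i : ℕ), hi⟩ : Fin n).castSucc = i := Fin.ext rfl
            show v ((⟨(i : ℕ), hi⟩ : Fin n).castSucc) = u ((⟨(i : ℕ), hi⟩ : Fin n).castSucc) + 1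
            rw [e]; exact h.2.1
          · exact h.2.2.1
          · intro j hj hj2
            have : j.castSucc ≠ i := by
              intro e; apply hj; apply Fin.ext
              have : ((j.castSucc : Fin (n+1)) : ℕ) = (i : ℕ) := congrArg Fin.val e
              simpa using this
            exact h.2.2.2 j.castSucc this hj2
    · rw [if_neg hl]
      by_cases h3 : (n + 1) % 3 = 0
      · rw [if_pos h3]
        have hn2 : 2 ≤ n := by omega
        constructor
        · rintro ⟨ha, hb, hc⟩
          refine ⟨Fin.last n, Or.inr ⟨?_, ?_, ?_, ?_⟩⟩
          · show 3 ∣ (n + 1); omega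
          · exact (z1 _ _).mpr hl
          · show v ⟨n - 2, _⟩ = u ⟨n - 1, _⟩ + u ⟨n - 2, _⟩
            exact hc.trans (add_comm _ _)
          · intro j hj hj2
            have hjn : (j : ℕ) ≠ n := fun e => hj (Fin.ext (by simpa using e))
            have hjlt : (j : ℕ) < n + 1 := j.isLt
            have hj2' : (j : ℕ) ≠ n - 2 := by simpa using hj2
            by_cases hc2 : (j : ℕ) < n - 2
            · have := ha ⟨(j : ℕ), by omega⟩ (by simpa using hc2)
              have ej : (⟨(j : ℕ), by omega⟩ : Fin n).castSucc = j := Fin.ext rfl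
              rw [ej] at this
              exact this.symm
            · have : j = ⟨n - 1, by omega⟩ := Fin.ext (by simp; omega)
              rw [this]; exact hb
        · rintro ⟨i, h | h⟩
          · exfalso
            by_cases hi : i = Fin.last n
            · apply h.1
              rw [hi]
              show 3 ∣ (n + 1); omega
            · have hiv : (i : ℕ) < n := by
                have := i.isLt
                have : (i : ℕ) ≠ n := fun e => hi (Fin.ext (by simpa using e))
                omega
              have := h.2.2 (Fin.last n) (fun e => hi e.symm)
              exact hl this.symm
          · by_cases hi : i = Fin.last n
            · subst hi
              refine ⟨?_, ?_, ?_⟩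
              · intro k hk
                have hne : (k.castSucc : Fin (n+1)) ≠ Fin.last n := by
                  intro e
                  have : (k : ℕ) = n := by simpa using congrArg Fin.val e
                  have := k.isLt; omega
                have hne2 : ((k.castSucc : Fin (n+1)) : ℕ) ≠ (Fin.last n : ℕ) - 2 := by
                  simp [Fin.last]; omega
                exact (h.2.2.2 k.castSucc hne hne2).symm
              · have hne : (⟨n - 1, by omega⟩ : Fin (n+1)) ≠ Fin.last n := by
                  intro e
                  have : n - 1 = n := by simpa [Fin.last] using congrArg Fin.val e
                  omega
                have hne2 : ((⟨n - 1, by omega⟩ : Fin (n+1)) : ℕ) ≠ (Fin.last n : ℕ) - 2 := by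
                  simp [Fin.last]; omega
                exact h.2.2.2 _ hne hne2
              · have := h.2.2.1
                exact this.trans (add_comm _ _)
            · exfalso
              have hiv : (i : ℕ) < n := by
                have := i.isLt
                have : (i : ℕ) ≠ n := fun e => hi (Fin.ext (by simpa using e))
                omega
              have hne2 : ((Fin.last n : Fin (n+1)) : ℕ) ≠ (i : ℕ) - 2 := by
                simp [Fin.last]; omega
              have := h.2.2.2 (Fin.last n) (fun e => hi e.symm) hne2
              exact hl this.symm
      · rw [if_neg h3]
        constructor
        · intro H
          refine ⟨Fin.last n, Or.inl ⟨?_, ?_, ?_⟩⟩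
          · show ¬ 3 ∣ (n + 1); omega
          · exact (z1 _ _).mpr hl
          · intro j hj
            have hjn : (j : ℕ) ≠ n := fun e => hj (Fin.ext (by simpa using e))
            have hjlt : (j : ℕ) < n + 1 := j.isLt
            have := H ⟨(j : ℕ), by omega⟩
            have ej : (⟨(j : ℕ), by omega⟩ : Fin n).castSucc = j := Fin.ext rfl
            rw [ej] at this
            exact this.symm
        · rintro ⟨i, h | h⟩
          · by_cases hi : i = Fin.last n
            · subst hi
              intro k
              have hne : (k.castSucc : Fin (n+1)) ≠ Fin.last n := by
                intro e
                have : (k : ℕ) = n := by simpa using congrArg Fin.val e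
                have := k.isLt; omega
              exact (h.2.2 k.castSucc hne).symm
            · exfalso
              have := h.2.2 (Fin.last n) (fun e => hi e.symm)
              exact hl this.symm
          · by_cases hi : i = Fin.last n
            · exfalso
              apply h3
              have := h.1
              rw [hi] at this
              have : 3 ∣ (n + 1) := this
              omega
            · exfalso
              have hiv : (i : ℕ) < n := by
                have := i.isLt
                have : (i : ℕ) ≠ n := fun e => hi (Fin.ext (by simpa using e))
                omega
              have hne2 : ((Fin.last n : Fin (n+1)) : ℕ) ≠ (i : ℕ) - 2 := by
                simp [Fin.last]; omega
              have := h.2.2.2 (Fin.last n) (fun e => hi e.symm) hne2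
              exact hl this.symm

lemma pred_ne {n : ℕ} {u v : Fin n → ZMod 2} (h : Pred n u v) : u ≠ v := by
  rintro rfl
  obtain ⟨i, h | h⟩ := h
  · exact z3 _ h.2.1
  · exact z3 _ h.2.1

theorem varietalCube_adj_iff (n : ℕ) (u v : Fin n → ZMod 2) :
    (varietalCube n).Adj u v ↔
      ∃ i : Fin n,
        (¬ (3 ∣ ((i : ℕ) + 1)) ∧ v i = u i + 1 ∧ ∀ j : Fin n, j ≠ i → v j = u j) ∨
        ((3 ∣ ((i : ℕ) + 1)) ∧ v i = u i + 1 ∧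
          v ⟨(i : ℕ) - 2, by have := i.isLt; omega⟩ =
            u ⟨(i : ℕ) - 1, by have := i.isLt; omega⟩ +
              u ⟨(i : ℕ) - 2, by have := i.isLt; omega⟩ ∧
          ∀ j : Fin n, j ≠ i → (j : ℕ) ≠ (i : ℕ) - 2 → v j = u j) := by
  rw [varietalCube, SimpleGraph.fromRel_adj]
  constructor
  · rintro ⟨hne, h | h⟩
    · exact (vq_iff n u v).mp h
    · exact (vq_iff n u v).mp (vq_symm n v u h)
  · intro hp
    have hp' : Pred n u v := hp
    exact ⟨pred_ne hp', Or.inl ((vq_iff n u v).mpr hp')⟩
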